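/- For every integer a ≥ 2 and every real x ∈ [1/2, 1 − 2^{-a}], the relative toll satisfies (ν(x) − x·log₂(1/x))/x < 2 − 2^{-a}·(a − 2 + 1/ln 2). -/

import Mathlib

open Real Filter Finset

set_option maxHeartbeats 1000000

noncomputable def epsBit (d : ℕ) (x : ℝ) : ℝ := ((⌊2 ^ d * x⌋ % 2 : ℤ) : ℝ)

noncomputable def nu (x : ℝ) : ℝ := ∑' d : ℕ, (d : ℝ) * epsBit d x / 2 ^ d

lemma epsBit_nonneg (d : ℕ) (x : ℝ) : 0 ≤ epsBit d x := by
  unfold epsBit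
  have := Int.emod_emod_of_dvd (⌊2 ^ d * x⌋) (dvd_refl 2)
  have h : (0:ℤ) ≤ ⌊2 ^ d * x⌋ % 2 := Int.emod_nonneg _ (by norm_num)
  exact_mod_cast h

lemma epsBit_le_one (d : ℕ) (x : ℝ) : epsBit d x ≤ 1 := by
  unfold epsBit
  have h : ⌊2 ^ d * x⌋ % 2 < 2 := Int.emod_lt_of_pos _ (by norm_num)
  have : ⌊2 ^ d * x⌋ % 2 ≤ 1 := by omega
  exact_mod_cast this

lemma digit_eq (z : ℝ) : (⌊2 * z⌋ % 2 : ℤ) = ⌊2 * z⌋ - 2 * ⌊z⌋ := by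
  have h1 : 2 * ⌊z⌋ ≤ ⌊2 * z⌋ := by
    apply Int.le_floor.2
    push_cast
    nlinarith [Int.floor_le z]
  have h2 : ⌊2 * z⌋ < 2 * ⌊z⌋ + 2 := by
    apply Int.floor_lt.2
    push_cast
    nlinarith [Int.lt_floor_add_one z]
  omega

lemma partial_sum (x : ℝ) (h0 : 0 ≤ x) (h1 : x < 1) (n : ℕ) :
    ∑ d ∈ range (n + 1), epsBit d x * (1/2) ^ d = (⌊2 ^ n * x⌋ : ℝ) / 2 ^ n := by
  induction n with
  | zero =>
    simp [epsBit]
    rw [Int.floor_eq_zero_iff.2 (by rw [Set.mem_Ico]; exact ⟨h0, h1⟩)]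
    norm_num
  | succ n ih =>
    rw [Finset.sum_range_succ, ih]
    have hz : (2:ℝ) ^ (n+1) * x = 2 * (2 ^ n * x) := by ring
    have hd : epsBit (n+1) x = ((⌊2 ^ (n+1) * x⌋ : ℤ) : ℝ) - 2 * ((⌊2 ^ n * x⌋ : ℤ) : ℝ) := by
      unfold epsBit
      rw [hz, digit_eq]
      push_cast
      ring
    rw [hd]
    have h2 : (2:ℝ) ^ n ≠ 0 := by positivity
    have h3 : (2:ℝ) ^ (n+1) ≠ 0 := by positivity
    rw [hz]
    field_simp
    have hh : (1/2:ℝ)^n * 2^n = 1 := by rw [← mul_pow]; norm_num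
    linear_combination ((⌊2 ^ n * x * 2⌋ : ℝ) - 2 * (⌊2 ^ n * x⌋ : ℝ)) * 2 ^ n * hh

lemma summable_eps (x : ℝ) : Summable (fun d : ℕ => epsBit d x * (1/2) ^ d) := by
  apply Summable.of_nonneg_of_le (fun d => mul_nonneg (epsBit_nonneg d x) (by positivity))
    (fun d => ?_) (summable_geometric_of_lt_one (by norm_num) (by norm_num : (1/2:ℝ) < 1))
  have := epsBit_le_one d x
  have h : (0:ℝ) ≤ (1/2)^d := by positivity
  nlinarith

lemma hasSum_eps (x : ℝ) (h0 : 0 ≤ x) (h1 : x < 1) :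
    HasSum (fun d : ℕ => epsBit d x * (1/2) ^ d) x := by
  rw [(summable_eps x).hasSum_iff_tendsto_nat]
  rw [← tendsto_add_atTop_iff_nat 1]
  have heq : ∀ n : ℕ, ∑ i ∈ range (n + 1), epsBit i x * (1/2)^i = (⌊2 ^ n * x⌋ : ℝ) / 2 ^ n :=
    partial_sum x h0 h1
  simp only [heq]
  have h2 : Tendsto (fun n : ℕ => x - (1/2:ℝ)^n) atTop (nhds (x - 0)) :=
    tendsto_const_nhds.sub (tendsto_pow_atTop_nhds_zero_of_lt_one (by norm_num) (by norm_num))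
  rw [sub_zero] at h2
  apply tendsto_of_tendsto_of_tendsto_of_le_of_le h2 tendsto_const_nhds
  · intro n
    have hp : (0:ℝ) < 2 ^ n := by positivity
    have := Int.lt_floor_add_one ((2:ℝ) ^ n * x)
    simp only
    have hhalf : (1/2:ℝ)^n * 2^n = 1 := by
      rw [← mul_pow]; norm_num
    have key : x ≤ ((⌊2 ^ n * x⌋ : ℝ) + 1) / 2 ^ n := (le_div_iff₀ hp).2 (by nlinarith)
    rw [sub_le_iff_le_add, div_pow, one_pow]
    rw [add_div] at key
    linarith
  · intro n
    have hp : (0:ℝ) < 2 ^ n := by positivity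
    have := Int.floor_le ((2:ℝ) ^ n * x)
    simp only
    rw [div_le_iff₀ hp]
    nlinarith

lemma hasSum_geo2 : HasSum (fun d : ℕ => ((1:ℝ)/2) ^ d) 2 := by
  have := hasSum_geometric_of_lt_one (by norm_num : (0:ℝ) ≤ 1/2) (by norm_num)
  norm_num at this
  exact this

lemma hasSum_dgeo : HasSum (fun d : ℕ => (d : ℝ) * (1/2) ^ d) 2 := by
  have hs : Summable (fun d : ℕ => (d : ℝ) * (1/2) ^ d) := by
    have := summable_pow_mul_geometric_of_norm_lt_one (R := ℝ) 1 (r := 1/2) (by norm_num)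
    simpa using this
  have ht : ∑' d : ℕ, (d : ℝ) * (1/2) ^ d = 2 := by
    rw [tsum_coe_mul_geometric_of_norm_lt_one (by norm_num : ‖(1:ℝ)/2‖ < 1)]
    norm_num
  have h := hs.hasSum
  rwa [ht] at h

lemma summable_deps (x : ℝ) : Summable (fun d : ℕ => (d : ℝ) * epsBit d x * (1/2) ^ d) := by
  apply Summable.of_nonneg_of_le
    (fun d => mul_nonneg (mul_nonneg (by positivity) (epsBit_nonneg d x)) (by positivity))
    (fun d => ?_) hasSum_dgeo.summable
  have h1 := epsBit_le_one d x
  have h2 : (0:ℝ) ≤ (1/2)^d := by positivity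
  have h3 : (0:ℝ) ≤ (d:ℝ) := Nat.cast_nonneg d
  have h4 := epsBit_nonneg d x
  nlinarith [mul_nonneg (mul_nonneg h3 h2) (sub_nonneg.2 h1)]

lemma hasSum_nu (x : ℝ) : HasSum (fun d : ℕ => (d : ℝ) * epsBit d x * (1/2) ^ d) (nu x) := by
  have heq : ∀ d : ℕ, (d : ℝ) * epsBit d x * (1/2) ^ d = (d : ℝ) * epsBit d x / 2 ^ d := by
    intro d
    rw [div_pow, one_pow, div_eq_mul_inv, div_eq_mul_inv]
    ring
  have := (summable_deps x).hasSum
  unfold nu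
  simp only [heq] at this ⊢
  exact this

lemma bits_one (x : ℝ) (k d : ℕ) (hd1 : 1 ≤ d) (hdk : d < k)
    (hx0 : 1 - (1/2:ℝ) ^ (k-1) ≤ x) (hx1 : x < 1) : epsBit d x = 1 := by
  have hfloor : ⌊(2:ℝ) ^ d * x⌋ = 2 ^ d - 1 := by
    apply Int.floor_eq_iff.2
    constructor
    · push_cast
      have hpow : (2:ℝ) ^ d * (1/2) ^ (k-1) ≤ 1 := by
        rw [div_pow, one_pow, mul_one_div, div_le_one (by positivity)]
        exact pow_le_pow_right₀ (by norm_num) (by omega)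
      nlinarith [pow_pos (by norm_num : (0:ℝ) < 2) d]
    · push_cast
      nlinarith [pow_pos (by norm_num : (0:ℝ) < 2) d]
  unfold epsBit
  rw [hfloor]
  have h2 : (2:ℤ) ^ d = 2 * 2 ^ (d - 1) := by
    rw [← pow_succ']
    congr 1
    omega
  have : ((2:ℤ) ^ d - 1) % 2 = 1 := by omega
  rw [this]
  norm_num

lemma nu_le_bucket (x : ℝ) (k : ℕ) (hk : 2 ≤ k)
    (hx0 : 1 - (1/2:ℝ) ^ (k-1) ≤ x) (hx1 : x < 1) :
    nu x ≤ 2 - k * (1 - x) := by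
  have hxnn : (0:ℝ) ≤ x := by
    have : (1/2:ℝ)^(k-1) ≤ 1 := pow_le_one₀ (by norm_num) (by norm_num)
    linarith
  -- HasSum for F d = ((d:ℝ) - k) * (1 - epsBit d x) * (1/2)^d
  have hF : HasSum (fun d : ℕ => ((d:ℝ) - k) * (1 - epsBit d x) * (1/2) ^ d)
      ((2 - nu x) - k * (2 - x)) := by
    have h1 := hasSum_dgeo.sub (hasSum_nu x)
    have h2 := (hasSum_geo2.sub (hasSum_eps x hxnn hx1)).mul_left (k:ℝ)
    have h3 := h1.sub h2
    convert h3 using 2 with d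
    rfl
    ring
  have hterm : ∀ d : ℕ, d ≠ 0 → 0 ≤ ((d:ℝ) - k) * (1 - epsBit d x) * (1/2) ^ d := by
    intro d hd
    rcases lt_or_ge d k with h | h
    · rw [bits_one x k d (by omega) h hx0 hx1]
      simp
    · apply mul_nonneg (mul_nonneg ?_ ?_) (by positivity)
      · have : (k:ℝ) ≤ d := by exact_mod_cast h
        linarith
      · linarith [epsBit_le_one d x]
  have h0 : epsBit 0 x = 0 := by
    unfold epsBit
    rw [pow_zero, one_mul, Int.floor_eq_zero_iff.2 (by rw [Set.mem_Ico]; exact ⟨hxnn, hx1⟩)]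
    norm_num
  have hle := le_hasSum hF 0 (fun j hj => hterm j hj)
  simp [h0] at hle
  -- hle : -(k:ℝ) ≤ 2 - nu x - k * (2 - x)
  nlinarith [hle]

lemma exists_bucket (y : ℝ) (h1 : 0 < y) (h2 : y ≤ 1/2) :
    ∃ k : ℕ, 2 ≤ k ∧ (1/2:ℝ)^k < y ∧ y ≤ (1/2:ℝ)^(k-1) := by
  classical
  have hP : ∃ m, (1/2:ℝ)^m < y := exists_pow_lt_of_lt_one h1 (by norm_num)
  set K := Nat.find hP with hK
  have hspec : (1/2:ℝ)^K < y := Nat.find_spec hP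
  have hK2 : 2 ≤ K := by
    by_contra h
    push_neg at h
    interval_cases K
    · norm_num at hspec; linarith
    · norm_num at hspec; linarith
  refine ⟨K, hK2, hspec, ?_⟩
  have := Nat.find_min hP (show K - 1 < K by omega)
  push_neg at this
  exact this

lemma star_ineq (a k : ℕ) (ha : 2 ≤ a) (hk : 2 ≤ k) (y L : ℝ)
    (hy2 : y ≤ 1/2) (hky : (1/2:ℝ)^k < y) (hty : (1/2:ℝ)^a ≤ y)
    (hL : 0 < L) (hL1 : L < 1) :
    (1/2:ℝ)^a * ((a:ℝ) - 2 + 1/L) * (1 - y) ≤ y * ((k:ℝ) - 2) + y * (1 - y) / L := by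
  have hy0 : 0 < y := lt_of_le_of_lt (by positivity) hky
  have h1y : 0 < 1 - y := by linarith
  have htpos : (0:ℝ) < (1/2)^a := by positivity
  have hinvL : 0 < 1/L := by positivity
  have hLinv : L * (1/L) = 1 := mul_one_div_cancel (ne_of_gt hL)
  rcases le_or_gt a k with h | h
  · have hak : ((a:ℝ) - 2) ≤ ((k:ℝ) - 2) := by
      have : (a:ℝ) ≤ k := by exact_mod_cast h
      linarith
    have hA : (0:ℝ) ≤ (a:ℝ) - 2 := by
      have : (2:ℝ) ≤ a := by exact_mod_cast ha
      linarith
    have e1 : (1/2:ℝ)^a * ((a:ℝ)-2) * (1-y) ≤ y * ((k:ℝ)-2) := by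
      nlinarith [mul_nonneg (mul_nonneg (sub_nonneg.2 hty) hA) h1y.le,
        mul_nonneg (mul_nonneg hy0.le hA) hy0.le,
        mul_nonneg hy0.le (sub_nonneg.2 hak)]
    have e2 : (1/2:ℝ)^a * (1/L) * (1-y) ≤ y * (1-y) / L := by
      rw [div_eq_mul_inv (y*(1-y)) L, ← one_div]
      nlinarith [mul_nonneg (mul_nonneg (sub_nonneg.2 hty) h1y.le) hinvL.le]
    nlinarith [e1, e2]
  · -- k < a
    obtain ⟨j, hj1, haj⟩ : ∃ j : ℕ, 1 ≤ j ∧ a = k + j := ⟨a - k, by omega, by omega⟩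
    have hsplit : (1/2:ℝ)^a = (1/2)^k * (1/2)^j := by
      rw [haj, pow_add]
    have hqpos : (0:ℝ) < (1/2)^j := by positivity
    have h2j : (j:ℝ) * L + 1 ≤ 2^j := by
      have hnat : j + 1 ≤ 2^j := Nat.lt_two_pow_self
      have hr : (j:ℝ) + 1 ≤ 2^j := by exact_mod_cast hnat
      have : (j:ℝ) * L ≤ (j:ℝ) := by nlinarith [Nat.cast_nonneg (α := ℝ) j]
      linarith
    have hhalfj : (1/2:ℝ)^j * 2^j = 1 := by
      rw [← mul_pow]; norm_num
    have hkey2 : (1/2:ℝ)^j * ((j:ℝ) + 1/L) ≤ 1/L := by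
      have h2jpos : (0:ℝ) < 2^j := by positivity
      have expand : L * ((1/2:ℝ)^j * ((j:ℝ) + 1/L)) * 2^j = ((j:ℝ)*L + 1) := by
        field_simp
        ring
        exact hhalfj
      nlinarith
    have hty' : (1/2:ℝ)^a ≤ y * (1/2)^j := by
      rw [hsplit]
      nlinarith
    have hK2 : (0:ℝ) ≤ (k:ℝ) - 2 := by
      have : (2:ℝ) ≤ k := by exact_mod_cast hk
      linarith
    have hcastA : (a:ℝ) - 2 = ((k:ℝ) - 2) + (j:ℝ) := by
      rw [haj]; push_cast; ring
    rw [hcastA]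
    have e1 : (1/2:ℝ)^a * ((k:ℝ)-2) * (1-y) ≤ y * ((k:ℝ)-2) := by
      nlinarith [mul_nonneg hK2 (sub_nonneg.2 hty),
        mul_nonneg hK2 (mul_nonneg htpos.le hy0.le)]
    have hpos : (0:ℝ) ≤ (j:ℝ) + 1/L := by positivity
    have step1 : (1/2:ℝ)^a * ((j:ℝ) + 1/L) ≤ y * (1/2)^j * ((j:ℝ) + 1/L) :=
      mul_le_mul_of_nonneg_right hty' hpos
    have step2 : y * (1/2)^j * ((j:ℝ) + 1/L) ≤ y * (1/L) := by
      have h := mul_le_mul_of_nonneg_left hkey2 hy0.le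
      rw [mul_assoc]
      exact h
    have e2 : (1/2:ℝ)^a * ((j:ℝ) + 1/L) * (1-y) ≤ y * (1-y) / L := by
      have h3 := mul_le_mul_of_nonneg_right (le_trans step1 step2) h1y.le
      have h4 : y * (1/L) * (1-y) = y * (1-y) / L := by
        field_simp
      linarith [h3]
    have geq : (1/2:ℝ)^a * (((k:ℝ)-2) + (j:ℝ) + 1/L) * (1-y)
        = (1/2:ℝ)^a * ((k:ℝ)-2) * (1-y) + (1/2:ℝ)^a * ((j:ℝ) + 1/L) * (1-y) := by ring
    rw [geq]
    linarith [e1, e2]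

lemma analytic (a k : ℕ) (ha : 2 ≤ a) (hk : 2 ≤ k) (y : ℝ)
    (hy2 : y ≤ 1/2) (hky : (1/2:ℝ)^k < y) (hty : (1/2:ℝ)^a ≤ y) :
    (2 - k*y)/(1-y) + Real.logb 2 (1-y)
      < 2 - (1/2:ℝ)^a * ((a:ℝ) - 2 + 1/Real.log 2) := by
  set L := Real.log 2 with hLdef
  have hL : 0 < L := Real.log_pos (by norm_num)
  have hL1 : L < 1 := by
    have := Real.log_two_lt_d9
    rw [hLdef]
    linarith
  have hy0 : 0 < y := lt_of_le_of_lt (by positivity) hky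
  have h1y : 0 < 1 - y := by linarith
  have hlog : Real.logb 2 (1-y) < -y / L := by
    have h1 : Real.log (1-y) < -y := by
      have := Real.log_lt_sub_one_of_pos h1y (by linarith : (1:ℝ) - y ≠ 1)
      linarith
    rw [Real.logb]
    gcongr
  have hstar := star_ineq a k ha hk y L hy2 hky hty hL hL1
  have hmain : (2 - k*y)/(1-y) + (-y)/L ≤ 2 - (1/2:ℝ)^a * ((a:ℝ) - 2 + 1/L) := by
    rw [div_add_div _ _ (ne_of_gt h1y) (ne_of_gt hL), div_le_iff₀ (by positivity)]
    have hexp : (2 - (1/2:ℝ)^a * ((a:ℝ) - 2 + 1/L)) * ((1-y)*L)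
        = 2*(1-y)*L - ((1/2:ℝ)^a * ((a:ℝ)-2+1/L) * (1-y)) * L := by ring
    have hexp2 : (y * ((k:ℝ) - 2) + y * (1 - y) / L) * L
        = y * ((k:ℝ)-2) * L + y*(1-y) := by
      field_simp
    nlinarith [mul_le_mul_of_nonneg_right hstar hL.le]
  linarith

theorem relative_toll_constant_bound (a : ℕ) (ha : 2 ≤ a) :
    ∀ x : ℝ, 1 / 2 ≤ x → x ≤ 1 - 1 / 2 ^ a →
      (nu x - x * Real.logb 2 (1 / x)) / x
        < 2 - (1 / 2 ^ a) * ((a : ℝ) - 2 + 1 / Real.log 2) := by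
  intro x hx1 hx2
  have hpow : (1/2:ℝ)^a = 1/2^a := by rw [div_pow, one_pow]
  set y := 1 - x with hy
  have hty : (1/2:ℝ)^a ≤ y := by rw [hpow]; linarith
  have hy0 : 0 < y := lt_of_lt_of_le (by positivity) hty
  have hy2 : y ≤ 1/2 := by linarith
  have hx1' : x < 1 := by linarith
  have hxpos : 0 < x := by linarith
  obtain ⟨k, hk2, hky, hyk⟩ := exists_bucket y hy0 hy2
  have hnu : nu x ≤ 2 - k * y := by
    have h := nu_le_bucket x k hk2 (by linarith) hx1'
    rw [hy]
    exact h
  have hxy : x = 1 - y := by rw [hy]; ring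
  have step1 : (nu x - x * Real.logb 2 (1/x)) / x
      ≤ ((2 - k*y) - x * Real.logb 2 (1/x)) / x := by
    gcongr
  have step2 : ((2 - k*y) - x * Real.logb 2 (1/x)) / x = (2 - k*y)/x + Real.logb 2 x := by
    rw [one_div, Real.logb_inv]
    field_simp
    ring
  have step3 : (2 - k*y)/x + Real.logb 2 x = (2 - k*y)/(1-y) + Real.logb 2 (1-y) := by
    rw [← hxy]
  have := analytic a k ha hk2 y hy2 hky hty
  rw [← hpow]
  linarith
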